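/- Let U : ℝ → ℝ be convex differentiable, γ > 0, and suppose grid functions a, b on {0,…,K}² (extended by Neumann ghost cells) satisfy U'(a_{i,j}) - U'(b_{i,j}) - γ(Δ_h(a-b))_{i,j} = c for all (i,j) and some constant c, where (Δ_h f)_{i,j} = (f_{i+1,j} + f_{i-1,j} + f_{i,j+1} + f_{i,j-1} - 4f_{i,j})/h², and ∑_{i,j} a_{i,j} = ∑_{i,j} b_{i,j}. Then a = b. -/

import Mathlib

/-- 1D discrete summation by parts with Neumann ghost cells. -/
lemma disc_sum_by_parts (K : ℕ) (f : ℤ → ℝ) (h0 : f (-1) = f 0)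
    (h1 : f ((K : ℤ) + 1) = f (K : ℤ)) :
    ∑ i ∈ Finset.range (K + 1),
        ((f ((i : ℤ) + 1) + f ((i : ℤ) - 1) - 2 * f (i : ℤ)) * f (i : ℤ))
      = -∑ i ∈ Finset.range K, (f ((i : ℤ) + 1) - f (i : ℤ)) ^ 2 := by
  have e1 : ∑ i ∈ Finset.range (K + 1), (f ((i : ℤ) + 1) - f (i : ℤ)) * f (i : ℤ)
      = ∑ i ∈ Finset.range K, (f ((i : ℤ) + 1) - f (i : ℤ)) * f (i : ℤ) := by
    rw [Finset.sum_range_succ, h1]; ring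
  have e2 : ∑ i ∈ Finset.range (K + 1), (f ((i : ℤ) - 1) - f (i : ℤ)) * f (i : ℤ)
      = ∑ i ∈ Finset.range K, (f (i : ℤ) - f ((i : ℤ) + 1)) * f ((i : ℤ) + 1) := by
    rw [Finset.sum_range_succ']
    have : ∀ i : ℕ, (((i + 1 : ℕ) : ℤ) - 1) = (i : ℤ) := by intro i; push_cast; ring
    simp only [Nat.cast_zero, zero_sub, h0]
    rw [Finset.sum_congr rfl (fun i _ => by rw [this i, Nat.cast_add, Nat.cast_one])]
    ring
  have key : ∀ i : ℕ, (f ((i : ℤ) + 1) + f ((i : ℤ) - 1) - 2 * f (i : ℤ)) * f (i : ℤ)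
      = (f ((i : ℤ) + 1) - f (i : ℤ)) * f (i : ℤ) + (f ((i : ℤ) - 1) - f (i : ℤ)) * f (i : ℤ) := by
    intro i; ring
  rw [Finset.sum_congr rfl (fun i _ => key i), Finset.sum_add_distrib, e1, e2,
    ← Finset.sum_add_distrib, ← Finset.sum_neg_distrib]
  exact Finset.sum_congr rfl (fun i _ => by ring)

/-- Core rigidity lemma for the discrete Neumann Laplacian. -/
lemma rigidity_core (K : ℕ) (μ : ℝ) (hμ : 0 < μ)
    (d e : ℤ → ℤ → ℝ) (c : ℝ)
    (hd1 : ∀ j, d (-1) j = d 0 j) (hd2 : ∀ j, d ((K : ℤ) + 1) j = d (K : ℤ) j)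
    (hd3 : ∀ i, d i (-1) = d i 0) (hd4 : ∀ i, d i ((K : ℤ) + 1) = d i (K : ℤ))
    (hpos : ∀ i j : ℤ, 0 ≤ e i j * d i j)
    (heq : ∀ i j : ℤ, 0 ≤ i → i ≤ K → 0 ≤ j → j ≤ K →
      e i j - μ * (d (i + 1) j + d (i - 1) j + d i (j + 1) + d i (j - 1) - 4 * d i j) = c)
    (hmass : ∑ i ∈ Finset.range (K + 1), ∑ j ∈ Finset.range (K + 1),
        d (i : ℤ) (j : ℤ) = 0) :
    ∀ i j : ℤ, 0 ≤ i → i ≤ K → 0 ≤ j → j ≤ K → d i j = 0 := by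
  classical
  set R := Finset.range (K + 1) with hR
  have hmem : ∀ i ∈ R, (0 : ℤ) ≤ (i : ℤ) ∧ (i : ℤ) ≤ K := by
    intro i hi
    rw [hR, Finset.mem_range] at hi
    exact ⟨Int.ofNat_nonneg i, by exact_mod_cast Nat.lt_succ_iff.mp hi⟩
  -- the summed equation
  have h0 : ∑ i ∈ R, ∑ j ∈ R,
      (e (i : ℤ) (j : ℤ) * d (i : ℤ) (j : ℤ)
        - μ * ((d ((i : ℤ) + 1) (j : ℤ) + d ((i : ℤ) - 1) (j : ℤ)
            + d (i : ℤ) ((j : ℤ) + 1) + d (i : ℤ) ((j : ℤ) - 1)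
            - 4 * d (i : ℤ) (j : ℤ)) * d (i : ℤ) (j : ℤ))) = 0 := by
    have : ∀ i ∈ R, ∀ j ∈ R,
        e (i : ℤ) (j : ℤ) * d (i : ℤ) (j : ℤ)
          - μ * ((d ((i : ℤ) + 1) (j : ℤ) + d ((i : ℤ) - 1) (j : ℤ)
              + d (i : ℤ) ((j : ℤ) + 1) + d (i : ℤ) ((j : ℤ) - 1)
              - 4 * d (i : ℤ) (j : ℤ)) * d (i : ℤ) (j : ℤ))
        = c * d (i : ℤ) (j : ℤ) := by
      intro i hi j hj
      have h1 := heq (i : ℤ) (j : ℤ) (hmem i hi).1 (hmem i hi).2 (hmem j hj).1 (hmem j hj).2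
      linear_combination h1 * d (i : ℤ) (j : ℤ)
    calc ∑ i ∈ R, ∑ j ∈ R, (e (i:ℤ) (j:ℤ) * d (i:ℤ) (j:ℤ)
          - μ * ((d ((i:ℤ)+1) (j:ℤ) + d ((i:ℤ)-1) (j:ℤ) + d (i:ℤ) ((j:ℤ)+1)
              + d (i:ℤ) ((j:ℤ)-1) - 4 * d (i:ℤ) (j:ℤ)) * d (i:ℤ) (j:ℤ)))
        = ∑ i ∈ R, ∑ j ∈ R, c * d (i:ℤ) (j:ℤ) := by
          refine Finset.sum_congr rfl fun i hi => Finset.sum_congr rfl fun j hj => this i hi j hj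
      _ = c * ∑ i ∈ R, ∑ j ∈ R, d (i:ℤ) (j:ℤ) := by
          rw [Finset.mul_sum]
          exact Finset.sum_congr rfl fun i _ => (Finset.mul_sum _ _ _).symm
      _ = 0 := by rw [hmass, mul_zero]
  -- split the Laplacian term into horizontal and vertical parts
  have hsplit : ∑ i ∈ R, ∑ j ∈ R,
      ((d ((i : ℤ) + 1) (j : ℤ) + d ((i : ℤ) - 1) (j : ℤ)
          + d (i : ℤ) ((j : ℤ) + 1) + d (i : ℤ) ((j : ℤ) - 1)
          - 4 * d (i : ℤ) (j : ℤ)) * d (i : ℤ) (j : ℤ))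
      = -(∑ j ∈ R, ∑ i ∈ Finset.range K, (d ((i:ℤ)+1) (j:ℤ) - d (i:ℤ) (j:ℤ))^2)
        + -(∑ i ∈ R, ∑ j ∈ Finset.range K, (d (i:ℤ) ((j:ℤ)+1) - d (i:ℤ) (j:ℤ))^2) := by
    have hx : ∑ i ∈ R, ∑ j ∈ R,
        ((d ((i:ℤ)+1) (j:ℤ) + d ((i:ℤ)-1) (j:ℤ) - 2 * d (i:ℤ) (j:ℤ)) * d (i:ℤ) (j:ℤ))
        = -(∑ j ∈ R, ∑ i ∈ Finset.range K, (d ((i:ℤ)+1) (j:ℤ) - d (i:ℤ) (j:ℤ))^2) := by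
      rw [Finset.sum_comm, ← Finset.sum_neg_distrib]
      refine Finset.sum_congr rfl fun j _ => ?_
      have := disc_sum_by_parts K (fun i => d i (j : ℤ)) (hd1 (j:ℤ)) (hd2 (j:ℤ))
      simpa using this
    have hy : ∑ i ∈ R, ∑ j ∈ R,
        ((d (i:ℤ) ((j:ℤ)+1) + d (i:ℤ) ((j:ℤ)-1) - 2 * d (i:ℤ) (j:ℤ)) * d (i:ℤ) (j:ℤ))
        = -(∑ i ∈ R, ∑ j ∈ Finset.range K, (d (i:ℤ) ((j:ℤ)+1) - d (i:ℤ) (j:ℤ))^2) := by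
      rw [← Finset.sum_neg_distrib]
      refine Finset.sum_congr rfl fun i _ => ?_
      exact disc_sum_by_parts K (fun j => d (i : ℤ) j) (hd3 (i:ℤ)) (hd4 (i:ℤ))
    calc ∑ i ∈ R, ∑ j ∈ R,
        ((d ((i:ℤ)+1) (j:ℤ) + d ((i:ℤ)-1) (j:ℤ) + d (i:ℤ) ((j:ℤ)+1) + d (i:ℤ) ((j:ℤ)-1)
            - 4 * d (i:ℤ) (j:ℤ)) * d (i:ℤ) (j:ℤ))
        = ∑ i ∈ R, ∑ j ∈ R,
          (((d ((i:ℤ)+1) (j:ℤ) + d ((i:ℤ)-1) (j:ℤ) - 2 * d (i:ℤ) (j:ℤ)) * d (i:ℤ) (j:ℤ))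
            + ((d (i:ℤ) ((j:ℤ)+1) + d (i:ℤ) ((j:ℤ)-1) - 2 * d (i:ℤ) (j:ℤ)) * d (i:ℤ) (j:ℤ))) := by
          refine Finset.sum_congr rfl fun i _ => Finset.sum_congr rfl fun j _ => by ring
      _ = _ := by
          rw [← hx, ← hy, ← Finset.sum_add_distrib]
          exact Finset.sum_congr rfl fun i _ => Finset.sum_add_distrib
  -- define the nonnegative quantities
  set T := ∑ i ∈ R, ∑ j ∈ R, e (i:ℤ) (j:ℤ) * d (i:ℤ) (j:ℤ) with hT
  set Qx := ∑ j ∈ R, ∑ i ∈ Finset.range K, (d ((i:ℤ)+1) (j:ℤ) - d (i:ℤ) (j:ℤ))^2 with hQx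
  set Qy := ∑ i ∈ R, ∑ j ∈ Finset.range K, (d (i:ℤ) ((j:ℤ)+1) - d (i:ℤ) (j:ℤ))^2 with hQy
  have hbal : T + μ * (Qx + Qy) = 0 := by
    have h1 : ∑ i ∈ R, ∑ j ∈ R,
        (e (i:ℤ) (j:ℤ) * d (i:ℤ) (j:ℤ)
          - μ * ((d ((i:ℤ)+1) (j:ℤ) + d ((i:ℤ)-1) (j:ℤ) + d (i:ℤ) ((j:ℤ)+1)
              + d (i:ℤ) ((j:ℤ)-1) - 4 * d (i:ℤ) (j:ℤ)) * d (i:ℤ) (j:ℤ)))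
        = T - μ * (∑ i ∈ R, ∑ j ∈ R,
            ((d ((i:ℤ)+1) (j:ℤ) + d ((i:ℤ)-1) (j:ℤ) + d (i:ℤ) ((j:ℤ)+1)
              + d (i:ℤ) ((j:ℤ)-1) - 4 * d (i:ℤ) (j:ℤ)) * d (i:ℤ) (j:ℤ))) := by
      rw [hT, Finset.mul_sum, ← Finset.sum_sub_distrib]
      refine Finset.sum_congr rfl fun i _ => ?_
      rw [Finset.mul_sum, ← Finset.sum_sub_distrib]
    rw [h1, hsplit] at h0
    linarith [h0]
  have hTnn : 0 ≤ T := Finset.sum_nonneg fun i _ => Finset.sum_nonneg fun j _ => hpos _ _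
  have hQxnn : 0 ≤ Qx := Finset.sum_nonneg fun j _ => Finset.sum_nonneg fun i _ => sq_nonneg _
  have hQynn : 0 ≤ Qy := Finset.sum_nonneg fun i _ => Finset.sum_nonneg fun j _ => sq_nonneg _
  have hQx0 : Qx = 0 := by nlinarith
  have hQy0 : Qy = 0 := by nlinarith
  -- edge equalities
  have hEx : ∀ i ∈ Finset.range K, ∀ j ∈ R, d ((i:ℤ)+1) (j:ℤ) = d (i:ℤ) (j:ℤ) := by
    intro i hi j hj
    have hrow := (Finset.sum_eq_zero_iff_of_nonneg
      (fun j _ => Finset.sum_nonneg fun i _ => sq_nonneg _)).mp hQx0 j hj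
    have := (Finset.sum_eq_zero_iff_of_nonneg (fun i _ => sq_nonneg _)).mp hrow i hi
    have h2 : d ((i:ℤ)+1) (j:ℤ) - d (i:ℤ) (j:ℤ) = 0 := by
      exact pow_eq_zero_iff (by norm_num) |>.mp this
    linarith
  have hEy : ∀ i ∈ R, ∀ j ∈ Finset.range K, d (i:ℤ) ((j:ℤ)+1) = d (i:ℤ) (j:ℤ) := by
    intro i hi j hj
    have hrow := (Finset.sum_eq_zero_iff_of_nonneg
      (fun i _ => Finset.sum_nonneg fun j _ => sq_nonneg _)).mp hQy0 i hi
    have := (Finset.sum_eq_zero_iff_of_nonneg (fun j _ => sq_nonneg _)).mp hrow j hj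
    have h2 : d (i:ℤ) ((j:ℤ)+1) - d (i:ℤ) (j:ℤ) = 0 := by
      exact pow_eq_zero_iff (by norm_num) |>.mp this
    linarith
  -- constancy
  have hrowc : ∀ j : ℕ, j ≤ K → ∀ i : ℕ, i ≤ K → d (i:ℤ) (j:ℤ) = d 0 (j:ℤ) := by
    intro j hj i
    induction i with
    | zero => intro _; norm_num
    | succ n ih =>
      intro hn
      have hn' : n ≤ K := Nat.le_of_succ_le hn
      have hnK : n < K := hn
      have : d ((n:ℤ)+1) (j:ℤ) = d (n:ℤ) (j:ℤ) :=
        hEx n (Finset.mem_range.mpr hnK) j (Finset.mem_range.mpr (Nat.lt_succ_of_le hj))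
      rw [show ((n+1 : ℕ) : ℤ) = (n:ℤ)+1 by push_cast; ring, this]
      exact ih hn'
  have hcolc : ∀ j : ℕ, j ≤ K → d 0 (j:ℤ) = d 0 0 := by
    intro j
    induction j with
    | zero => intro _; norm_num
    | succ n ih =>
      intro hn
      have hn' : n ≤ K := Nat.le_of_succ_le hn
      have : d (0:ℤ) ((n:ℤ)+1) = d 0 (n:ℤ) :=
        hEy 0 (Finset.mem_range.mpr (Nat.succ_pos K)) n (Finset.mem_range.mpr hn)
      rw [show ((n+1 : ℕ) : ℤ) = (n:ℤ)+1 by push_cast; ring, this]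
      exact ih hn'
  have hconst : ∀ i : ℕ, i ≤ K → ∀ j : ℕ, j ≤ K → d (i:ℤ) (j:ℤ) = d 0 0 := by
    intro i hi j hj
    rw [hrowc j hj i hi, hcolc j hj]
  -- conclude d 0 0 = 0
  have hsum : ∑ i ∈ R, ∑ j ∈ R, d (i:ℤ) (j:ℤ) = ((K+1 : ℕ) : ℝ) * (((K+1 : ℕ) : ℝ) * d 0 0) := by
    rw [Finset.sum_congr rfl (fun i hi => Finset.sum_congr rfl (fun j hj =>
      hconst i (Nat.lt_succ_iff.mp (Finset.mem_range.mp hi)) j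
        (Nat.lt_succ_iff.mp (Finset.mem_range.mp hj))))]
    simp [hR, Finset.sum_const, Finset.card_range, mul_comm, mul_assoc]
  have hKpos : (0 : ℝ) < ((K+1 : ℕ) : ℝ) := by positivity
  have hd00 : d 0 0 = 0 := by
    rw [hmass] at hsum
    have := hsum.symm
    rcases mul_eq_zero.mp this with h' | h'
    · exact absurd h' (ne_of_gt hKpos)
    · rcases mul_eq_zero.mp h' with h'' | h''
      · exact absurd h'' (ne_of_gt hKpos)
      · exact h''
  intro i j hi0 hiK hj0 hjK
  lift i to ℕ using hi0
  lift j to ℕ using hj0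
  have hi : i ≤ K := by exact_mod_cast hiK
  have hj : j ≤ K := by exact_mod_cast hjK
  rw [hconst i hi j hj, hd00]

/-- Discrete rigidity: if `U'(a) - U'(b) - γ Δ_h(a - b)` is constant on the
grid (Neumann ghost extension) and `a`, `b` have equal total mass, then
`a = b`. -/
theorem discrete_laplacian_rigidity (K : ℕ) (hK : 0 < K) (h γ : ℝ)
    (hh : h = 1 / (K : ℝ)) (hγ : 0 < γ)
    (U : ℝ → ℝ) (hU : ConvexOn ℝ Set.univ U) (hUd : Differentiable ℝ U)
    (a b : ℤ → ℤ → ℝ) (c : ℝ)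
    (ha1 : ∀ j, a (-1) j = a 0 j) (ha2 : ∀ j, a ((K : ℤ) + 1) j = a (K : ℤ) j)
    (ha3 : ∀ i, a i (-1) = a i 0) (ha4 : ∀ i, a i ((K : ℤ) + 1) = a i (K : ℤ))
    (hb1 : ∀ j, b (-1) j = b 0 j) (hb2 : ∀ j, b ((K : ℤ) + 1) j = b (K : ℤ) j)
    (hb3 : ∀ i, b i (-1) = b i 0) (hb4 : ∀ i, b i ((K : ℤ) + 1) = b i (K : ℤ))
    (heq : ∀ i j : ℤ, 0 ≤ i → i ≤ K → 0 ≤ j → j ≤ K →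
      deriv U (a i j) - deriv U (b i j)
        - γ * (((a (i + 1) j - b (i + 1) j) + (a (i - 1) j - b (i - 1) j)
                  + (a i (j + 1) - b i (j + 1)) + (a i (j - 1) - b i (j - 1))
                  - 4 * (a i j - b i j)) / h ^ 2) = c)
    (hmass : ∑ i ∈ Finset.range (K + 1), ∑ j ∈ Finset.range (K + 1),
        a (i : ℤ) (j : ℤ)
      = ∑ i ∈ Finset.range (K + 1), ∑ j ∈ Finset.range (K + 1),
          b (i : ℤ) (j : ℤ)) :
    ∀ i j : ℤ, 0 ≤ i → i ≤ K → 0 ≤ j → j ≤ K → a i j = b i j := by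
  have hhpos : 0 < h := by
    rw [hh]; positivity
  have hμ : 0 < γ / h ^ 2 := by positivity
  have hmono : Monotone (deriv U) := by
    have := hU.monotoneOn_deriv (fun x _ => hUd x)
    exact monotoneOn_univ.mp this
  have key := rigidity_core K (γ / h ^ 2) hμ
    (fun i j => a i j - b i j) (fun i j => deriv U (a i j) - deriv U (b i j)) c
    (fun j => by simp [ha1 j, hb1 j])
    (fun j => by simp [ha2 j, hb2 j])
    (fun i => by simp [ha3 i, hb3 i])
    (fun i => by simp [ha4 i, hb4 i])
    (fun i j => by
      show 0 ≤ (deriv U (a i j) - deriv U (b i j)) * (a i j - b i j)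
      rcases le_total (a i j) (b i j) with hab | hab
      · nlinarith [hmono hab]
      · nlinarith [hmono hab])
    (fun i j hi0 hiK hj0 hjK => by
      have h1 := heq i j hi0 hiK hj0 hjK
      linear_combination h1)
    (by
      rw [← sub_eq_zero] at hmass
      rw [← hmass, ← Finset.sum_sub_distrib]
      exact Finset.sum_congr rfl fun i _ => Finset.sum_sub_distrib _ _)
  intro i j hi0 hiK hj0 hjK
  have := key i j hi0 hiK hj0 hjK
  simpa [sub_eq_zero] using this
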